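/- Let S_{2,2,1} be the spider on 6 vertices with two legs of two edges each and one leg of one edge. Then for every n ≥ 6, ex_c(n, S_{2,2,1}) = 2n − 3. -/

import Mathlib

open SimpleGraph

/-- `G` contains a copy of `F`, i.e. a subgraph isomorphic to `F`
(given by an injective graph homomorphism). -/
def ContainsCopy {α β : Type*} (F : SimpleGraph α) (G : SimpleGraph β) : Prop :=
  ∃ f : α ↪ β, ∀ ⦃a b : α⦄, F.Adj a b → G.Adj (f a) (f b)

/-- The connected Turán number `ex_c(n, F)`: the maximum number of edges of a
connected `F`-free simple graph on `n` vertices. -/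
noncomputable def exConn {α : Type*} (n : ℕ) (F : SimpleGraph α) : ℕ :=
  sSup {m | ∃ G : SimpleGraph (Fin n), G.Connected ∧ ¬ ContainsCopy F G ∧ m = G.edgeSet.ncard}

/-- The spider `S_{2,2,1}` on 6 vertices: center `0`, two legs `0-1-2` and `0-3-4` of two
edges each, and one leg `0-5` of one edge. -/
def spider221 : SimpleGraph (Fin 6) :=
  SimpleGraph.fromRel (fun i j =>
    (i = 0 ∧ j = 1) ∨ (i = 1 ∧ j = 2) ∨ (i = 0 ∧ j = 3) ∨ (i = 3 ∧ j = 4) ∨ (i = 0 ∧ j = 5))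

variable {V : Type*}

def HasS (G : SimpleGraph V) : Prop :=
  ∃ v x1 x2 x3 x4 x5 : V, ([v,x1,x2,x3,x4,x5] : List V).Nodup ∧
    G.Adj v x1 ∧ G.Adj x1 x2 ∧ G.Adj v x3 ∧ G.Adj x3 x4 ∧ G.Adj v x5

lemma containsCopy_iff_hasS (G : SimpleGraph V) : ContainsCopy spider221 G ↔ HasS G := by
  constructor
  · rintro ⟨f, hf⟩
    refine ⟨f 0, f 1, f 2, f 3, f 4, f 5, ?_, ?_, ?_, ?_, ?_, ?_⟩
    · simp only [List.nodup_cons, List.mem_cons, List.mem_singleton, List.not_mem_nil,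
        List.nodup_nil, or_false, f.injective.eq_iff]
      refine ⟨?_,?_,?_,?_,?_⟩ <;> simp <;> decide
    · exact hf ⟨by decide, Or.inl (Or.inl ⟨rfl, rfl⟩)⟩
    · exact hf ⟨by decide, Or.inl (Or.inr (Or.inl ⟨rfl, rfl⟩))⟩
    · exact hf ⟨by decide, Or.inl (Or.inr (Or.inr (Or.inl ⟨rfl, rfl⟩)))⟩
    · exact hf ⟨by decide, Or.inl (Or.inr (Or.inr (Or.inr (Or.inl ⟨rfl, rfl⟩))))⟩
    · exact hf ⟨by decide, Or.inl (Or.inr (Or.inr (Or.inr (Or.inr ⟨rfl, rfl⟩))))⟩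
  · rintro ⟨v, x1, x2, x3, x4, x5, hnd, h1, h2, h3, h4, h5⟩
    simp only [List.nodup_cons, List.mem_cons, List.mem_singleton, List.not_mem_nil,
      List.nodup_nil, or_false, not_or, and_true] at hnd
    obtain ⟨⟨e1,e2,e3,e4,e5⟩,⟨e6,e7,e8,e9⟩,⟨e10,e11,e12⟩,⟨e13,e14⟩,e15,-⟩ := hnd
    have g0 : (![v,x1,x2,x3,x4,x5] : Fin 6 → V) 0 = v := rfl
    have g1 : (![v,x1,x2,x3,x4,x5] : Fin 6 → V) 1 = x1 := rfl
    have g2 : (![v,x1,x2,x3,x4,x5] : Fin 6 → V) 2 = x2 := rfl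
    have g3 : (![v,x1,x2,x3,x4,x5] : Fin 6 → V) 3 = x3 := rfl
    have g4 : (![v,x1,x2,x3,x4,x5] : Fin 6 → V) 4 = x4 := rfl
    have g5 : (![v,x1,x2,x3,x4,x5] : Fin 6 → V) 5 = x5 := rfl
    refine ⟨⟨![v,x1,x2,x3,x4,x5], ?_⟩, ?_⟩
    · intro a b hab
      fin_cases a <;> fin_cases b <;>
        simp only [g0,g1,g2,g3,g4,g5, Fin.isValue] at hab <;> first | rfl | (exfalso; simp_all)
    · intro a b hab
      obtain ⟨hne, h | h⟩ := hab <;>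
      · rcases h with ⟨ha,hb⟩|⟨ha,hb⟩|⟨ha,hb⟩|⟨ha,hb⟩|⟨ha,hb⟩ <;>
          subst ha <;> subst hb <;>
          first
            | exact h1 | exact h2 | exact h3 | exact h4 | exact h5
            | exact h1.symm | exact h2.symm | exact h3.symm | exact h4.symm | exact h5.symm




section Infra
variable {V : Type*} [Fintype V] [DecidableEq V] (G : SimpleGraph V) [DecidableRel G.Adj]

instance (s : Set V) [DecidablePred (· ∈ s)] : DecidableRel (G.induce s).Adj := by
  intro x y; exact inferInstanceAs (Decidable (G.Adj x y))

lemma deg_induce (s : Set V) [DecidablePred (· ∈ s)] (w : s) :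
    (G.induce s).degree w = ((G.neighborFinset (w:V)).filter (· ∈ s)).card := by
  show ((G.induce s).neighborFinset w).card = _
  apply Finset.card_bij (fun (z : s) _ => (z : V))
  · intro z hz
    rw [mem_neighborFinset] at hz
    simp only [Finset.mem_filter, mem_neighborFinset]
    exact ⟨hz, z.2⟩
  · intro z1 h1 z2 h2 h; exact Subtype.ext h
  · intro z hz
    simp only [Finset.mem_filter, mem_neighborFinset] at hz
    refine ⟨⟨z, hz.2⟩, ?_, rfl⟩
    rw [mem_neighborFinset]
    exact hz.1

lemma sum_deg_subtype (s : Set V) [DecidablePred (· ∈ s)] :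
    2 * (G.induce s).edgeFinset.card = ∑ w : s, ((G.neighborFinset (w:V)).filter (· ∈ s)).card := by
  rw [← sum_degrees_eq_twice_card_edges]
  exact Finset.sum_congr rfl fun w _ => deg_induce G s w

end Infra

section Infra2
variable {V : Type*} [Fintype V] [DecidableEq V] (G : SimpleGraph V) [DecidableRel G.Adj]

lemma edge_delete (v : V) :
    G.edgeFinset.card = (G.induce ({v}ᶜ : Set V)).edgeFinset.card + G.degree v := by
  have h2 : 2 * (G.induce ({v}ᶜ : Set V)).edgeFinset.card
      = ∑ w ∈ Finset.univ.erase v, ((G.neighborFinset w).filter (· ∈ ({v}ᶜ : Set V))).card := by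
    rw [sum_deg_subtype]
    rw [Finset.sum_set_coe (f := fun w => ((G.neighborFinset w).filter (· ∈ ({v}ᶜ : Set V))).card) (s := {v}ᶜ)]
    congr 1
    ext z; simp
  have key : ∀ w ∈ Finset.univ.erase v,
      ((G.neighborFinset w).filter (· ∈ ({v}ᶜ : Set V))).card + (if G.Adj w v then 1 else 0)
        = G.degree w := by
    intro w hw
    have herase : (G.neighborFinset w).filter (· ∈ ({v}ᶜ : Set V)) = (G.neighborFinset w).erase v := by
      ext z; simp [Finset.mem_erase, and_comm, eq_comm]
    rw [herase, ← card_neighborFinset_eq_degree]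
    by_cases hadj : G.Adj w v
    · have hv : v ∈ G.neighborFinset w := by rwa [mem_neighborFinset]
      have hpos : 1 ≤ (G.neighborFinset w).card := Finset.card_pos.2 ⟨v, hv⟩
      rw [Finset.card_erase_of_mem hv, if_pos hadj]
      omega
    · have hv : v ∉ G.neighborFinset w := by rwa [mem_neighborFinset]
      rw [Finset.erase_eq_of_notMem hv, if_neg hadj, Nat.add_zero]
  have hsum := Finset.sum_congr rfl key
  rw [Finset.sum_add_distrib] at hsum
  have hite : ∑ w ∈ Finset.univ.erase v, (if G.Adj w v then 1 else 0) = G.degree v := by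
    rw [← Finset.card_filter]
    rw [← card_neighborFinset_eq_degree]
    congr 1
    ext z
    simp only [Finset.mem_filter, Finset.mem_erase, Finset.mem_univ, true_and,
      mem_neighborFinset, and_true]
    constructor
    · rintro ⟨_, h⟩; exact h.symm
    · intro h; exact ⟨h.ne', h.symm⟩
  have htot : ∑ w : V, G.degree w = G.degree v + ∑ w ∈ Finset.univ.erase v, G.degree w := by
    rw [← Finset.add_sum_erase _ _ (Finset.mem_univ v)]
  have hG := G.sum_degrees_eq_twice_card_edges
  omega

end Infra2

section Infra3
variable {V : Type*} [Fintype V] [DecidableEq V] (G : SimpleGraph V) [DecidableRel G.Adj]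

lemma edge_split (sA sB : Set V) [DecidablePred (· ∈ sA)] [DecidablePred (· ∈ sB)] (v : V)
    (hunion : sA ∪ sB = Set.univ) (hinter : sA ∩ sB = {v})
    (hcross : ∀ x ∈ sA, ∀ y ∈ sB, x ≠ v → y ≠ v → ¬ G.Adj x y) :
    G.edgeFinset.card = (G.induce sA).edgeFinset.card + (G.induce sB).edgeFinset.card := by
  classical
  have hvA : v ∈ sA := by
    have : v ∈ sA ∩ sB := hinter.symm ▸ Set.mem_singleton v
    exact this.1
  have hvB : v ∈ sB := by
    have : v ∈ sA ∩ sB := hinter.symm ▸ Set.mem_singleton v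
    exact this.2
  set dA := fun w => ((G.neighborFinset w).filter (· ∈ sA)).card with hdA
  set dB := fun w => ((G.neighborFinset w).filter (· ∈ sB)).card with hdB
  -- full neighborhoods for non-v vertices of each side
  have hfullA : ∀ w ∈ sA.toFinset.erase v, dA w = G.degree w := by
    intro w hw
    rw [Finset.mem_erase, Set.mem_toFinset] at hw
    obtain ⟨hwv, hwA⟩ := hw
    rw [hdA, ← card_neighborFinset_eq_degree]
    refine congrArg Finset.card (Finset.filter_true_of_mem ?_)
    intro z hz
    rw [mem_neighborFinset] at hz
    by_contra hzA
    have hzB : z ∈ sB := by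
      have : z ∈ sA ∪ sB := hunion.symm ▸ Set.mem_univ z
      rw [Set.mem_union] at this
      tauto
    have hzv : z ≠ v := fun h => hzA (h ▸ hvA)
    exact hcross w hwA z hzB hwv hzv hz
  have hfullB : ∀ w ∈ sB.toFinset.erase v, dB w = G.degree w := by
    intro w hw
    rw [Finset.mem_erase, Set.mem_toFinset] at hw
    obtain ⟨hwv, hwB⟩ := hw
    rw [hdB, ← card_neighborFinset_eq_degree]
    refine congrArg Finset.card (Finset.filter_true_of_mem ?_)
    intro z hz
    rw [mem_neighborFinset] at hz
    by_contra hzB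
    have hzA : z ∈ sA := by
      have : z ∈ sA ∪ sB := hunion.symm ▸ Set.mem_univ z
      rw [Set.mem_union] at this
      tauto
    have hzv : z ≠ v := fun h => hzB (h ▸ hvB)
    exact hcross z hzA w hwB hzv hwv hz.symm
  have hA : 2 * (G.induce sA).edgeFinset.card = dA v + ∑ w ∈ sA.toFinset.erase v, G.degree w := by
    rw [sum_deg_subtype, Finset.sum_set_coe (f := dA) (s := sA),
      ← Finset.add_sum_erase _ _ (Set.mem_toFinset.2 hvA)]
    congr 1
    exact Finset.sum_congr rfl hfullA
  have hB : 2 * (G.induce sB).edgeFinset.card = dB v + ∑ w ∈ sB.toFinset.erase v, G.degree w := by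
    rw [sum_deg_subtype, Finset.sum_set_coe (f := dB) (s := sB),
      ← Finset.add_sum_erase _ _ (Set.mem_toFinset.2 hvB)]
    congr 1
    exact Finset.sum_congr rfl hfullB
  have hvd : dA v + dB v = G.degree v := by
    rw [hdA, hdB, ← card_neighborFinset_eq_degree, ← Finset.card_union_of_disjoint, ← Finset.filter_or]
    · apply congrArg
      apply Finset.filter_true_of_mem
      intro z hz
      have : z ∈ sA ∪ sB := hunion.symm ▸ Set.mem_univ z
      rw [Set.mem_union] at this
      tauto
    · rw [Finset.disjoint_filter]
      intro z hz hzA hzB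
      have : z ∈ sA ∩ sB := ⟨hzA, hzB⟩
      rw [hinter] at this
      rw [mem_neighborFinset] at hz
      exact hz.ne' this
  have hpart : Finset.univ.erase v = (sA.toFinset.erase v) ∪ (sB.toFinset.erase v) := by
    ext z
    simp only [Finset.mem_erase, Finset.mem_univ, and_true, Finset.mem_union, Set.mem_toFinset]
    constructor
    · intro hz
      have : z ∈ sA ∪ sB := hunion.symm ▸ Set.mem_univ z
      rw [Set.mem_union] at this
      tauto
    · tauto
  have hdisj : Disjoint (sA.toFinset.erase v) (sB.toFinset.erase v) := by
    rw [Finset.disjoint_left]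
    intro z hz1 hz2
    rw [Finset.mem_erase, Set.mem_toFinset] at hz1 hz2
    have : z ∈ sA ∩ sB := ⟨hz1.2, hz2.2⟩
    rw [hinter] at this
    exact hz1.1 this
  have hsplit : ∑ w ∈ Finset.univ.erase v, G.degree w
      = ∑ w ∈ sA.toFinset.erase v, G.degree w + ∑ w ∈ sB.toFinset.erase v, G.degree w := by
    rw [hpart, Finset.sum_union hdisj]
  have htot : ∑ w : V, G.degree w = G.degree v + ∑ w ∈ Finset.univ.erase v, G.degree w := by
    rw [← Finset.add_sum_erase _ _ (Finset.mem_univ v)]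
  have hG := G.sum_degrees_eq_twice_card_edges
  omega

end Infra3

section Walks
variable {V : Type*} {G : SimpleGraph V}

lemma walk_exists_boundary (P : V → Prop) {x y : V} (w : G.Walk x y) (hx : P x) (hy : ¬ P y) :
    ∃ a b, P a ∧ ¬ P b ∧ G.Adj a b := by
  induction w with
  | nil => exact absurd hx hy
  | @cons u z y h p ih =>
    by_cases hz : P z
    · exact ih hz hy
    · exact ⟨u, z, hx, hz, h⟩

lemma reachable_induce_of_walk (s : Set V) {x y : V} (w : G.Walk x y)
    (hw : ∀ z ∈ w.support, z ∈ s) (hx : x ∈ s) (hy : y ∈ s) :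
    (G.induce s).Reachable ⟨x, hx⟩ ⟨y, hy⟩ := by
  induction w with
  | nil => exact Reachable.refl _
  | @cons u z y h p ih =>
    have hzs : z ∈ s := hw z (by simp [SimpleGraph.Walk.support_cons])
    have hadj : (G.induce s).Adj ⟨u, hx⟩ ⟨z, hzs⟩ := h
    exact hadj.reachable.trans (ih (fun t ht => hw t (by simp [SimpleGraph.Walk.support_cons]; tauto)) hzs hy)

lemma walk_to_nbr {v x : V} (w : G.Walk x v) (hx : x ≠ v) :
    ∃ u, G.Adj v u ∧ ∃ w' : G.Walk x u, ∀ z ∈ w'.support, z ≠ v := by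
  revert hx
  induction w with
  | nil => intro h; exact absurd rfl h
  | @cons u z y h p ih =>
    intro hx
    by_cases hz : z = y
    · subst hz
      exact ⟨u, h.symm, SimpleGraph.Walk.nil, by simpa using hx⟩
    · obtain ⟨u', hu', w', hw'⟩ := ih hz
      refine ⟨u', hu', SimpleGraph.Walk.cons h w', ?_⟩
      intro t ht
      rw [SimpleGraph.Walk.support_cons, List.mem_cons] at ht
      rcases ht with rfl | ht
      · exact hx
      · exact hw' t ht

lemma conn_induce_of_walks (s : Set V) (a : V) (ha : a ∈ s)
    (h : ∀ x ∈ s, ∃ w : G.Walk x a, ∀ z ∈ w.support, z ∈ s) : (G.induce s).Connected := by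
  rw [connected_iff]
  refine ⟨fun x y => ?_, ⟨⟨a, ha⟩⟩⟩
  obtain ⟨wx, hwx⟩ := h x x.2
  obtain ⟨wy, hwy⟩ := h y y.2
  have h1 := reachable_induce_of_walk s wx hwx x.2 ha
  have h2 := reachable_induce_of_walk s wy hwy y.2 ha
  exact h1.trans h2.symm

lemma hasS_induce {s : Set V} (h : HasS (G.induce s)) : HasS G := by
  obtain ⟨v, x1, x2, x3, x4, x5, hnd, h1, h2, h3, h4, h5⟩ := h
  refine ⟨v, x1, x2, x3, x4, x5, ?_, h1, h2, h3, h4, h5⟩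
  have : ([(v:V), x1, x2, x3, x4, x5] : List V)
      = ([v, x1, x2, x3, x4, x5] : List s).map Subtype.val := by simp
  rw [this]
  exact hnd.map (fun a b hab => Subtype.ext hab)

lemma deg_pos_of_connected [Fintype V] [DecidableEq V] [DecidableRel G.Adj]
    (hconn : G.Connected) (hcard : 2 ≤ Fintype.card V) (v : V) : 0 < G.degree v := by
  have : Nontrivial V := Fintype.one_lt_card_iff_nontrivial.1 hcard
  obtain ⟨x, hx⟩ := exists_ne v
  obtain ⟨w⟩ := hconn.preconnected v x
  cases w with
  | nil => exact absurd rfl hx.symm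
  | @cons u z y h p =>
    rw [← card_neighborFinset_eq_degree]
    exact Finset.card_pos.2 ⟨z, by rwa [mem_neighborFinset]⟩

end Walks


section SpiderFind
variable {V : Type*} {G : SimpleGraph V}

lemma hasS_mk {v x1 x2 x3 x4 x5 : V}
    (h1 : G.Adj v x1) (h2 : G.Adj x1 x2) (h3 : G.Adj v x3) (h4 : G.Adj x3 x4) (h5 : G.Adj v x5)
    (n02 : v ≠ x2) (n04 : v ≠ x4) (n13 : x1 ≠ x3) (n14 : x1 ≠ x4) (n15 : x1 ≠ x5)
    (n23 : x2 ≠ x3) (n24 : x2 ≠ x4) (n25 : x2 ≠ x5) (n35 : x3 ≠ x5) (n45 : x4 ≠ x5) :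
    HasS G := by
  refine ⟨v, x1, x2, x3, x4, x5, ?_, h1, h2, h3, h4, h5⟩
  simp only [List.nodup_cons, List.mem_cons, List.mem_singleton, List.not_mem_nil,
    List.nodup_nil, or_false, not_or, and_true]
  exact ⟨⟨h1.ne, n02, h3.ne, n04, h5.ne⟩, ⟨h2.ne, n13, n14, n15⟩, ⟨n23, n24, n25⟩,
    ⟨h4.ne, n35⟩, n45, not_false⟩

/-- a 5-cycle plus a vertex attached at `c1` gives a spider. -/
lemma hasS_C5_attach {c1 c2 c3 c4 c5 x : V}
    (e12 : G.Adj c1 c2) (e23 : G.Adj c2 c3) (e34 : G.Adj c3 c4) (e45 : G.Adj c4 c5)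
    (e51 : G.Adj c5 c1) (hx : G.Adj c1 x)
    (d13 : c1 ≠ c3) (d14 : c1 ≠ c4) (d24 : c2 ≠ c4) (d25 : c2 ≠ c5) (d35 : c3 ≠ c5)
    (x2 : x ≠ c2) (x3 : x ≠ c3) (x4 : x ≠ c4) (x5 : x ≠ c5) :
    HasS G := by
  -- center c1, legs c1-c2-c3 and c1-c5-c4, pendant x
  exact hasS_mk e12 e23 e51.symm e45.symm hx d13 d14 d25 d24 x2.symm
    d35 e34.ne x3.symm x5.symm x4.symm

end SpiderFind

section MinDeg
variable {V : Type*} [Fintype V] [DecidableEq V] {G : SimpleGraph V} [DecidableRel G.Adj]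

lemma exists_outside (T : Finset V) (h : T.card < Fintype.card V) : ∃ y, y ∉ T := by
  by_contra hc
  push_neg at hc
  have : Finset.univ ⊆ T := fun z _ => hc z
  have := Finset.card_le_card this
  simp only [Finset.card_univ] at this
  omega

lemma three_nbrs {v : V} (h : 3 ≤ G.degree v) :
    ∃ a b c, G.Adj v a ∧ G.Adj v b ∧ G.Adj v c ∧ a ≠ b ∧ a ≠ c ∧ b ≠ c := by
  rw [← card_neighborFinset_eq_degree] at h
  obtain ⟨t, hts, ht3⟩ := Finset.exists_subset_card_eq h
  rw [Finset.card_eq_three] at ht3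
  obtain ⟨a, b, c, hab, hac, hbc, rfl⟩ := ht3
  have ha := hts (by simp : a ∈ ({a,b,c} : Finset V))
  have hb := hts (by simp : b ∈ ({a,b,c} : Finset V))
  have hc := hts (by simp : c ∈ ({a,b,c} : Finset V))
  rw [mem_neighborFinset] at ha hb hc
  exact ⟨a, b, c, ha, hb, hc, hab, hac, hbc⟩

/-- any 5-cycle in a connected graph on ≥ 6 vertices gives a spider. -/
lemma hasS_of_C5 (hconn : G.Connected) (hcard : 6 ≤ Fintype.card V)
    {c1 c2 c3 c4 c5 : V}
    (e12 : G.Adj c1 c2) (e23 : G.Adj c2 c3) (e34 : G.Adj c3 c4) (e45 : G.Adj c4 c5)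
    (e51 : G.Adj c5 c1)
    (d13 : c1 ≠ c3) (d14 : c1 ≠ c4) (d24 : c2 ≠ c4) (d25 : c2 ≠ c5) (d35 : c3 ≠ c5) :
    HasS G := by
  classical
  set T : Finset V := {c1, c2, c3, c4, c5} with hT
  have hTcard : T.card < Fintype.card V := by
    have h1 : T.card ≤ 5 := by
      apply le_trans (Finset.card_insert_le _ _)
      apply Nat.succ_le_succ
      apply le_trans (Finset.card_insert_le _ _)
      apply Nat.succ_le_succ
      apply le_trans (Finset.card_insert_le _ _)
      apply Nat.succ_le_succ
      apply le_trans (Finset.card_insert_le _ _)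
      apply Nat.succ_le_succ
      simp
    omega
  obtain ⟨y, hy⟩ := exists_outside T hTcard
  obtain ⟨w⟩ := hconn.preconnected c1 y
  obtain ⟨a, b, haT, hbT, hab⟩ := walk_exists_boundary (· ∈ T) w (by simp [hT]) hy
  have hbm : b ∉ ({c1,c2,c3,c4,c5} : Finset V) := hbT
  simp only [Finset.mem_insert, Finset.mem_singleton, not_or] at hbm
  obtain ⟨b1, b2, b3, b4, b5⟩ := hbm
  simp only [hT, Finset.mem_insert, Finset.mem_singleton] at haT
  rcases haT with rfl | rfl | rfl | rfl | rfl
  · exact hasS_C5_attach e12 e23 e34 e45 e51 hab d13 d14 d24 d25 d35 b2 b3 b4 b5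
  · exact hasS_C5_attach e23 e34 e45 e51 e12 hab d24 d25 d35 d13.symm d14.symm b3 b4 b5 b1
  · exact hasS_C5_attach e34 e45 e51 e12 e23 hab d35 d13.symm d14.symm d24.symm d25.symm b4 b5 b1 b2
  · exact hasS_C5_attach e45 e51 e12 e23 e34 hab d14.symm d24.symm d25.symm d35.symm d13 b5 b1 b2 b3
  · exact hasS_C5_attach e51 e12 e23 e34 e45 hab d25.symm d35.symm d13 d14 d24 b1 b2 b3 b4

/-- 4-cycle with an outside vertex adjacent to two consecutive cycle vertices: gives a 5-cycle. -/
lemma hasS_C4_pair (hconn : G.Connected) (hcard : 6 ≤ Fintype.card V)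
    {c1 c2 c3 c4 x : V}
    (e12 : G.Adj c1 c2) (e23 : G.Adj c2 c3) (e34 : G.Adj c3 c4) (e41 : G.Adj c4 c1)
    (d13 : c1 ≠ c3) (d24 : c2 ≠ c4)
    (xn1 : x ≠ c1) (xn2 : x ≠ c2) (xn3 : x ≠ c3) (xn4 : x ≠ c4)
    (hx1 : G.Adj x c1) (hx2 : G.Adj x c2) : HasS G := by
  -- 5-cycle (x, c1, c4, c3, c2)
  exact hasS_of_C5 hconn hcard hx1 e41.symm e34.symm e23.symm hx2.symm
    xn4 xn3 d13 e12.ne d24.symm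

/-- 4-cycle with a pendant vertex at `c1`, min degree 3: gives a spider. -/
lemma hasS_C4_attach (hconn : G.Connected) (hcard : 6 ≤ Fintype.card V)
    (hdeg : ∀ v, 3 ≤ G.degree v) {c1 c2 c3 c4 x : V}
    (e12 : G.Adj c1 c2) (e23 : G.Adj c2 c3) (e34 : G.Adj c3 c4) (e41 : G.Adj c4 c1)
    (d13 : c1 ≠ c3) (d24 : c2 ≠ c4)
    (xn1 : x ≠ c1) (xn2 : x ≠ c2) (xn3 : x ≠ c3) (xn4 : x ≠ c4)
    (hx : G.Adj c1 x) : HasS G := by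
  classical
  by_cases hy : ∃ y, G.Adj x y ∧ y ∉ ({x, c1, c2, c3, c4} : Finset V)
  · obtain ⟨y, hxy, hym⟩ := hy
    simp only [Finset.mem_insert, Finset.mem_singleton, not_or] at hym
    obtain ⟨-, y1, y2, y3, y4⟩ := hym
    exact hasS_mk hx hxy e12 e23 e41.symm
      (Ne.symm y1) d13 xn2 xn3 xn4 y2 y3 y4 d24 e34.ne
  · push_neg at hy
    by_cases a2 : G.Adj x c2
    · exact hasS_C4_pair hconn hcard e12 e23 e34 e41 d13 d24 xn1 xn2 xn3 xn4 hx.symm a2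
    by_cases a4 : G.Adj x c4
    · exact hasS_C4_pair hconn hcard e41 e12 e23 e34 d24.symm d13 xn4 xn1 xn2 xn3 a4 hx.symm
    -- neighbours of x within {c1, c3}: degree contradiction
    exfalso
    have hsub : G.neighborFinset x ⊆ {c1, c3} := by
      intro z hz
      rw [mem_neighborFinset] at hz
      have hmem := hy z hz
      simp only [Finset.mem_insert, Finset.mem_singleton] at hmem
      rcases hmem with rfl | rfl | rfl | rfl | rfl
      · exact absurd rfl hz.ne
      · simp
      · exact absurd hz a2
      · simp
      · exact absurd hz a4
    have hle := Finset.card_le_card hsub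
    have h2 : ({c1, c3} : Finset V).card ≤ 2 := by
      apply le_trans (Finset.card_insert_le _ _); simp
    have h3 := hdeg x
    rw [← card_neighborFinset_eq_degree] at h3
    omega

/-- any 4-cycle in a connected min-degree-3 graph on ≥ 6 vertices gives a spider. -/
lemma hasS_of_C4 (hconn : G.Connected) (hcard : 6 ≤ Fintype.card V)
    (hdeg : ∀ v, 3 ≤ G.degree v) {c1 c2 c3 c4 : V}
    (e12 : G.Adj c1 c2) (e23 : G.Adj c2 c3) (e34 : G.Adj c3 c4) (e41 : G.Adj c4 c1)
    (d13 : c1 ≠ c3) (d24 : c2 ≠ c4) : HasS G := by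
  classical
  set T : Finset V := {c1, c2, c3, c4} with hT
  have hTcard : T.card < Fintype.card V := by
    have h1 : T.card ≤ 4 := by
      apply le_trans (Finset.card_insert_le _ _)
      apply Nat.succ_le_succ
      apply le_trans (Finset.card_insert_le _ _)
      apply Nat.succ_le_succ
      apply le_trans (Finset.card_insert_le _ _)
      apply Nat.succ_le_succ
      simp
    omega
  obtain ⟨y, hy⟩ := exists_outside T hTcard
  obtain ⟨w⟩ := hconn.preconnected c1 y
  obtain ⟨a, b, haT, hbT, hab⟩ := walk_exists_boundary (· ∈ T) w (by simp [hT]) hy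
  have hbm : b ∉ ({c1,c2,c3,c4} : Finset V) := hbT
  simp only [Finset.mem_insert, Finset.mem_singleton, not_or] at hbm
  obtain ⟨b1, b2, b3, b4⟩ := hbm
  simp only [hT, Finset.mem_insert, Finset.mem_singleton] at haT
  rcases haT with rfl | rfl | rfl | rfl
  · exact hasS_C4_attach hconn hcard hdeg e12 e23 e34 e41 d13 d24 b1 b2 b3 b4 hab
  · exact hasS_C4_attach hconn hcard hdeg e23 e34 e41 e12 d24 d13.symm b2 b3 b4 b1 hab
  · exact hasS_C4_attach hconn hcard hdeg e34 e41 e12 e23 d13.symm d24.symm b3 b4 b1 b2 hab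
  · exact hasS_C4_attach hconn hcard hdeg e41 e12 e23 e34 d24.symm d13 b4 b1 b2 b3 hab

lemma getVert_eq_support_get {x y : V} (p : G.Walk x y) :
    ∀ (i : ℕ) (hi : i < p.support.length), p.getVert i = p.support.get ⟨i, hi⟩ := by
  induction p with
  | nil => intro i hi; simp only [SimpleGraph.Walk.support_nil, List.length_singleton] at hi
           interval_cases i <;> rfl
  | @cons u z y h q ih =>
    intro i hi
    cases i with
    | zero => rfl
    | succ i' =>
      have hlen : i' < q.support.length := by
        have hsc := SimpleGraph.Walk.support_cons h q
        rw [hsc, List.length_cons] at hi; omega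
      have hget : (SimpleGraph.Walk.cons h q).support.get ⟨i'+1, hi⟩ = q.support.get ⟨i', hlen⟩ := by
        have hsc := SimpleGraph.Walk.support_cons h q
        rw [List.get_of_eq hsc]
        rfl
      rw [SimpleGraph.Walk.getVert_cons_succ, hget]
      exact ih i' hlen

lemma path_getVert_inj {x y : V} {p : G.Walk x y} (hp : p.IsPath) {i j : ℕ}
    (hi : i ≤ p.length) (hj : j ≤ p.length) (h : p.getVert i = p.getVert j) : i = j := by
  have hl := p.length_support
  have h1 : i < p.support.length := by omega
  have h2 : j < p.support.length := by omega
  rw [getVert_eq_support_get p i h1, getVert_eq_support_get p j h2] at h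
  have := (hp.support_nodup.get_inj_iff).1 h
  exact congrArg Fin.val this

lemma hasS_of_minDeg (hconn : G.Connected) (hcard : 6 ≤ Fintype.card V)
    (hdeg : ∀ v, 3 ≤ G.degree v) : HasS G := by
  classical
  have hne : Nonempty V := Fintype.card_pos_iff.mp (by omega)
  obtain ⟨v0⟩ := hne
  set P : Set ℕ := {k | ∃ x y, ∃ w : G.Walk x y, w.IsPath ∧ w.length = k} with hP
  have hPne : P.Nonempty := ⟨0, v0, v0, SimpleGraph.Walk.nil, SimpleGraph.Walk.IsPath.nil, rfl⟩
  have hPbdd : BddAbove P := by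
    refine ⟨Fintype.card V, ?_⟩
    rintro k ⟨x, y, w, hw, rfl⟩
    exact le_of_lt hw.length_lt
  obtain ⟨x, y, w, hw, hlen⟩ := Nat.sSup_mem hPne hPbdd
  have hmax : ∀ m ∈ P, m ≤ sSup P := fun m hm => le_csSup hPbdd hm
  -- all neighbours of x are on w, at positive index
  have hnbr : ∀ z, G.Adj x z → ∃ i, 1 ≤ i ∧ i ≤ w.length ∧ w.getVert i = z := by
    intro z hz
    have hzsup : z ∈ w.support := by
      by_contra hzs
      have hp2 : (SimpleGraph.Walk.cons hz.symm w).IsPath := hw.cons hzs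
      have hm : w.length + 1 ∈ P := ⟨z, y, _, hp2, by simp⟩
      have := hmax _ hm
      omega
    rw [SimpleGraph.Walk.mem_support_iff_exists_getVert] at hzsup
    obtain ⟨i, hiz, hil⟩ := hzsup
    refine ⟨i, ?_, hil, hiz⟩
    rcases Nat.eq_zero_or_pos i with rfl | hpos
    · rw [SimpleGraph.Walk.getVert_zero] at hiz
      exact absurd hiz hz.ne
    · exact hpos
  obtain ⟨a, b, c, ha, hb, hc, hab, hac, hbc⟩ := three_nbrs (hdeg x)
  obtain ⟨ia, ha1, haL, haV⟩ := hnbr a ha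
  obtain ⟨ib, hb1, hbL, hbV⟩ := hnbr b hb
  obtain ⟨ic, hc1, hcL, hcV⟩ := hnbr c hc
  have dab : ia ≠ ib := fun h => hab (by rw [← haV, ← hbV, h])
  have dac : ia ≠ ic := fun h => hac (by rw [← haV, ← hcV, h])
  have dbc : ib ≠ ic := fun h => hbc (by rw [← hbV, ← hcV, h])
  have hj3 : ∃ j z, 3 ≤ j ∧ j ≤ w.length ∧ w.getVert j = z ∧ G.Adj x z := by
    have : 3 ≤ ia ∨ 3 ≤ ib ∨ 3 ≤ ic := by omega
    rcases this with h | h | h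
    · exact ⟨ia, a, h, haL, haV, ha⟩
    · exact ⟨ib, b, h, hbL, hbV, hb⟩
    · exact ⟨ic, c, h, hcL, hcV, hc⟩
  obtain ⟨j, z, hj, hjL, hjV, hz⟩ := hj3
  set s : ℕ → V := fun i => w.getVert i with hs
  have hclose : G.Adj (s j) (s 0) := by
    rw [hs]; simp only [SimpleGraph.Walk.getVert_zero]
    rw [hjV]; exact hz.symm
  have adjs : ∀ i, i < j → G.Adj (s i) (s (i+1)) :=
    fun i hi => w.adj_getVert_succ (by omega)
  have nei : ∀ i1 i2, i1 ≤ j → i2 ≤ j → i1 ≠ i2 → s i1 ≠ s i2 := by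
    intro i1 i2 h1 h2 hne heq
    exact hne (path_getVert_inj hw (by omega) (by omega) heq)
  rcases Nat.lt_or_ge j 5 with hj5 | hj5
  · rcases Nat.lt_or_ge j 4 with hj4 | hj4
    · -- j = 3 : 4-cycle
      have hj' : j = 3 := by omega
      subst hj'
      exact hasS_of_C4 hconn hcard hdeg (adjs 0 (by omega)) (adjs 1 (by omega))
        (adjs 2 (by omega)) hclose (nei 0 2 (by omega) (by omega) (by omega))
        (nei 1 3 (by omega) (by omega) (by omega))
    · -- j = 4 : 5-cycle
      have hj' : j = 4 := by omega
      subst hj'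
      exact hasS_of_C5 hconn hcard (adjs 0 (by omega)) (adjs 1 (by omega))
        (adjs 2 (by omega)) (adjs 3 (by omega)) hclose
        (nei 0 2 (by omega) (by omega) (by omega)) (nei 0 3 (by omega) (by omega) (by omega))
        (nei 1 3 (by omega) (by omega) (by omega)) (nei 1 4 (by omega) (by omega) (by omega))
        (nei 2 4 (by omega) (by omega) (by omega))
  · -- j ≥ 5 : long cycle
    have hthird : ∃ t, G.Adj (s 2) t ∧ t ≠ s 1 ∧ t ≠ s 3 := by
      have h3 := hdeg (s 2)
      rw [← card_neighborFinset_eq_degree] at h3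
      have hsd : 0 < ((G.neighborFinset (s 2)) \ {s 1, s 3}).card := by
        have hcard2 : ({s 1, s 3} : Finset V).card ≤ 2 := by
          apply le_trans (Finset.card_insert_le _ _); simp
        have := Finset.le_card_sdiff ({s 1, s 3} : Finset V) (G.neighborFinset (s 2))
        omega
      obtain ⟨t, ht⟩ := Finset.card_pos.1 hsd
      rw [Finset.mem_sdiff, mem_neighborFinset, Finset.mem_insert, Finset.mem_singleton] at ht
      push_neg at ht
      exact ⟨t, ht.1, ht.2.1, ht.2.2⟩
    obtain ⟨t, ht2, ht1, ht3⟩ := hthird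
    by_cases h0 : t = s 0
    · subst h0
      -- center s2: legs s2-s0-sj, s2-s3-s4, pendant s1
      exact hasS_mk ht2 hclose.symm (adjs 2 (by omega)) (adjs 3 (by omega))
        (adjs 1 (by omega)).symm
        (nei 2 j (by omega) (by omega) (by omega)) (nei 2 4 (by omega) (by omega) (by omega))
        (nei 0 3 (by omega) (by omega) (by omega)) (nei 0 4 (by omega) (by omega) (by omega))
        (nei 0 1 (by omega) (by omega) (by omega)) (nei j 3 (by omega) (by omega) (by omega))
        (nei j 4 (by omega) (by omega) (by omega)) (nei j 1 (by omega) (by omega) (by omega))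
        (nei 3 1 (by omega) (by omega) (by omega)) (nei 4 1 (by omega) (by omega) (by omega))
    by_cases h4 : t = s 4
    · subst h4
      -- center s2: legs s2-s4-s5, s2-s1-s0, pendant s3
      exact hasS_mk ht2 (adjs 4 (by omega)) (adjs 1 (by omega)).symm
        (adjs 0 (by omega)).symm (adjs 2 (by omega))
        (nei 2 5 (by omega) (by omega) (by omega)) (nei 2 0 (by omega) (by omega) (by omega))
        (nei 4 1 (by omega) (by omega) (by omega)) (nei 4 0 (by omega) (by omega) (by omega))
        (nei 4 3 (by omega) (by omega) (by omega)) (nei 5 1 (by omega) (by omega) (by omega))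
        (nei 5 0 (by omega) (by omega) (by omega)) (nei 5 3 (by omega) (by omega) (by omega))
        (nei 1 3 (by omega) (by omega) (by omega)) (nei 0 3 (by omega) (by omega) (by omega))
    · -- center s2: legs s2-s1-s0, s2-s3-s4, pendant t
      exact hasS_mk (adjs 1 (by omega)).symm (adjs 0 (by omega)).symm (adjs 2 (by omega))
        (adjs 3 (by omega)) ht2
        (nei 2 0 (by omega) (by omega) (by omega)) (nei 2 4 (by omega) (by omega) (by omega))
        (nei 1 3 (by omega) (by omega) (by omega)) (nei 1 4 (by omega) (by omega) (by omega))
        (Ne.symm ht1) (nei 0 3 (by omega) (by omega) (by omega))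
        (nei 0 4 (by omega) (by omega) (by omega)) (fun h => h0 h.symm)
        (Ne.symm ht3) (fun h => h4 h.symm)

lemma sym2_ne_fst {a b c d : V} (h1 : a ≠ c) (h2 : a ≠ d) : s(a, b) ≠ s(c, d) := by
  intro h; rw [Sym2.eq_iff] at h; tauto

lemma sym2_ne_snd {a b c d : V} (h1 : b ≠ c) (h2 : b ≠ d) : s(a, b) ≠ s(c, d) := by
  intro h; rw [Sym2.eq_iff] at h; tauto

lemma spider_pairing {v x y1 y2 y3 y4 : V} (hfree : ¬ HasS G) (hvx : G.Adj v x)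
    (ny2 : x ≠ y2) (ny4 : x ≠ y4) (a13 : y1 ≠ y3) (a14 : y1 ≠ y4) (b1 : y1 ≠ v)
    (a23 : y2 ≠ y3) (a24 : y2 ≠ y4) (b2 : y2 ≠ v) (b3 : y3 ≠ v) (b4 : y4 ≠ v)
    (h1 : G.Adj x y1) (h2 : G.Adj y1 y2) (h3 : G.Adj x y3) (h4 : G.Adj y3 y4) : False :=
  hfree (hasS_mk h1 h2 h3 h4 hvx.symm ny2 ny4 a13 a14 b1 a23 a24 b2 b3 b4)

lemma base6 (hcard : Fintype.card V = 6) (hconn : G.Connected) (hfree : ¬ HasS G)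
    {v : V} (hv : G.degree v ≤ 2) : G.edgeFinset.card ≤ 9 := by
  classical
  by_contra hgt
  push_neg at hgt
  have he10 : 10 ≤ G.edgeFinset.card := hgt
  -- v has a neighbour x
  have hdegv : 0 < G.degree v := deg_pos_of_connected hconn (by omega) v
  rw [← card_neighborFinset_eq_degree] at hdegv
  obtain ⟨x, hx⟩ := Finset.card_pos.1 hdegv
  rw [mem_neighborFinset] at hx
  -- extract the other four vertices
  have hxv : x ≠ v := hx.ne'
  have hU : (((Finset.univ : Finset V).erase v).erase x).card = 4 := by
    rw [Finset.card_erase_of_mem (Finset.mem_erase.2 ⟨hxv, Finset.mem_univ x⟩),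
      Finset.card_erase_of_mem (Finset.mem_univ v), Finset.card_univ, hcard]
  obtain ⟨p, hpU⟩ := Finset.card_pos.1 (by omega : 0 < (((Finset.univ : Finset V).erase v).erase x).card)
  have hU3 : ((((Finset.univ : Finset V).erase v).erase x).erase p).card = 3 := by
    rw [Finset.card_erase_of_mem hpU, hU]
  rw [Finset.card_eq_three] at hU3
  obtain ⟨q, r, s, hqr, hqs, hrs, hset⟩ := hU3
  have hqU : q ∈ (((Finset.univ : Finset V).erase v).erase x).erase p := by rw [hset]; simp
  have hrU : r ∈ (((Finset.univ : Finset V).erase v).erase x).erase p := by rw [hset]; simp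
  have hsU : s ∈ (((Finset.univ : Finset V).erase v).erase x).erase p := by rw [hset]; simp
  simp only [Finset.mem_erase, Finset.mem_univ, and_true] at hpU hqU hrU hsU
  obtain ⟨hpx, hpv⟩ := hpU
  obtain ⟨hqp, hqx, hqv⟩ := hqU
  obtain ⟨hrp, hrx, hrv⟩ := hrU
  obtain ⟨hsp, hsx, hsv⟩ := hsU
  -- at most 2 non-edges avoiding v
  set B : Finset (Sym2 V) :=
    (((⊤ : SimpleGraph V).edgeFinset \ G.edgeFinset).filter (fun e => v ∉ e)) with hB
  have hBcard : B.card ≤ 2 := by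
    set A : Finset (Sym2 V) := G.edgeFinset.filter (fun e => v ∉ e) with hA
    have hdisj : Disjoint A B := by
      rw [hA, hB]
      exact Finset.disjoint_filter_filter Finset.disjoint_sdiff
    have hsub : A ∪ B ⊆ ((⊤ : SimpleGraph V).edgeFinset.filter (fun e => v ∉ e)) := by
      apply Finset.union_subset
      · apply Finset.monotone_filter_left
        exact edgeFinset_mono le_top
      · apply Finset.monotone_filter_left
        exact Finset.sdiff_subset
    have htopfilter : (((⊤ : SimpleGraph V).edgeFinset.filter (fun e => v ∉ e))).card = 10 := by
      have hsplit := Finset.card_filter_add_card_filter_not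
        (s := (⊤ : SimpleGraph V).edgeFinset) (p := fun e => v ∈ e)
      have hinc : ((⊤ : SimpleGraph V).edgeFinset.filter (fun e => v ∈ e)).card = 5 := by
        rw [← incidenceFinset_eq_filter, card_incidenceFinset_eq_degree]
        have : (⊤ : SimpleGraph V).degree v = Fintype.card V - 1 := by
          rw [← card_neighborFinset_eq_degree]
          have : (⊤ : SimpleGraph V).neighborFinset v = Finset.univ.erase v := by
            ext z; simp [mem_neighborFinset, top_adj, Finset.mem_erase, eq_comm, ne_comm]
          rw [this, Finset.card_erase_of_mem (Finset.mem_univ v), Finset.card_univ]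
        rw [this, hcard]
      have htop : (⊤ : SimpleGraph V).edgeFinset.card = 15 := by
        rw [card_edgeFinset_top_eq_card_choose_two, hcard]
        rfl
      omega
    have hGsplit := Finset.card_filter_add_card_filter_not
      (s := G.edgeFinset) (p := fun e => v ∈ e)
    have hGinc : (G.edgeFinset.filter (fun e => v ∈ e)).card ≤ 2 := by
      rw [← incidenceFinset_eq_filter, card_incidenceFinset_eq_degree]
      exact hv
    have hAcard : 8 ≤ A.card := by
      rw [hA]
      omega
    have := Finset.card_le_card hsub
    rw [Finset.card_union_of_disjoint hdisj] at this
    omega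
  -- helper: among any three distinct non-v pairs, one is an edge
  have H3 : ∀ a1 b1 a2 b2 a3 b3 : V,
      a1 ≠ v → b1 ≠ v → a2 ≠ v → b2 ≠ v → a3 ≠ v → b3 ≠ v →
      a1 ≠ b1 → a2 ≠ b2 → a3 ≠ b3 →
      s(a1, b1) ≠ s(a2, b2) → s(a1, b1) ≠ s(a3, b3) → s(a2, b2) ≠ s(a3, b3) →
      ¬ G.Adj a1 b1 → ¬ G.Adj a2 b2 → ¬ G.Adj a3 b3 → False := by
    intro a1 b1 a2 b2 a3 b3 hv1 hv1' hv2 hv2' hv3 hv3' hne1 hne2 hne3 h12 h13 h23 hn1 hn2 hn3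
    have hm : ∀ (a b : V), a ≠ v → b ≠ v → a ≠ b → ¬ G.Adj a b → s(a, b) ∈ B := by
      intro a b hav hbv hab hnadj
      rw [hB, Finset.mem_filter, Finset.mem_sdiff, mem_edgeFinset, mem_edgeFinset]
      refine ⟨⟨?_, ?_⟩, ?_⟩
      · rw [mem_edgeSet, top_adj]; exact hab
      · rw [mem_edgeSet]; exact hnadj
      · rw [Sym2.mem_iff]
        push_neg
        exact ⟨Ne.symm hav, Ne.symm hbv⟩
    have hsub3 : ({s(a1,b1), s(a2,b2), s(a3,b3)} : Finset (Sym2 V)) ⊆ B := by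
      intro e he
      simp only [Finset.mem_insert, Finset.mem_singleton] at he
      rcases he with rfl | rfl | rfl
      · exact hm _ _ hv1 hv1' hne1 hn1
      · exact hm _ _ hv2 hv2' hne2 hn2
      · exact hm _ _ hv3 hv3' hne3 hn3
    have h3card : ({s(a1,b1), s(a2,b2), s(a3,b3)} : Finset (Sym2 V)).card = 3 := by
      rw [Finset.card_insert_of_notMem (by simp [h12, h13]),
        Finset.card_insert_of_notMem (by simp [h23]), Finset.card_singleton]
    have := Finset.card_le_card hsub3
    omega
  -- sub-lemmas
  have hxv' : x ≠ v := hxv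
  have SL1 : ∀ α β γ δ : V, α ≠ β → α ≠ γ → α ≠ δ → β ≠ γ → β ≠ δ → γ ≠ δ →
      α ≠ x → β ≠ x → γ ≠ x → δ ≠ x → α ≠ v → β ≠ v → γ ≠ v → δ ≠ v →
      G.Adj x α → G.Adj x β → G.Adj x γ → False := by
    intro α β γ δ nab nag nad nbg nbd ngd nax nbx ngx ndx nav nbv ngv ndv hxa hxb hxc
    by_cases E1 : G.Adj α β
    · by_cases E2 : G.Adj γ δ
      · exact spider_pairing hfree hx nbx.symm ndx.symm nag nad nav nbg nbd nbv ngv ndv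
          hxa E1 hxc E2
      · by_cases E3 : G.Adj α γ
        · by_cases E4 : G.Adj β δ
          · exact spider_pairing hfree hx ngx.symm ndx.symm nab nad nav nbg.symm ngd ngv nbv ndv
              hxa E3 hxb E4
          · have Ead : G.Adj α δ := by
              by_contra hne
              exact H3 γ δ β δ α δ ngv ndv nbv ndv nav ndv ngd nbd nad
                (sym2_ne_fst nbg.symm ngd) (sym2_ne_fst nag.symm ngd)
                (sym2_ne_fst nab.symm nbd) E2 E4 hne
            have Ebg : G.Adj β γ := by
              by_contra hne
              exact H3 γ δ β δ β γ ngv ndv nbv ndv nbv ngv ngd nbd nbg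
                (sym2_ne_fst nbg.symm ngd) (sym2_ne_snd nbd.symm ngd.symm)
                (sym2_ne_snd nbd.symm ngd.symm) E2 E4 hne
            exact spider_pairing hfree hx ndx.symm ngx.symm nab nag nav nbd.symm ngd.symm ndv nbv ngv
              hxa Ead hxb Ebg
        · have Ead : G.Adj α δ := by
            by_contra hne
            exact H3 γ δ α γ α δ ngv ndv nav ngv nav ndv ngd nag nad
              (sym2_ne_snd nad.symm ngd.symm) (sym2_ne_fst nag.symm ngd)
              (sym2_ne_snd nag.symm ngd) E2 E3 hne
          have Ebg : G.Adj β γ := by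
            by_contra hne
            exact H3 γ δ α γ β γ ngv ndv nav ngv nbv ngv ngd nag nbg
              (sym2_ne_snd nad.symm ngd.symm) (sym2_ne_snd nbd.symm ngd.symm)
              (sym2_ne_fst nab nag) E2 E3 hne
          exact spider_pairing hfree hx ndx.symm ngx.symm nab nag nav nbd.symm ngd.symm ndv nbv ngv
            hxa Ead hxb Ebg
    · by_cases E3 : G.Adj α γ
      · by_cases E4 : G.Adj β δ
        · exact spider_pairing hfree hx ngx.symm ndx.symm nab nad nav nbg.symm ngd ngv nbv ndv
            hxa E3 hxb E4
        · have Ead : G.Adj α δ := by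
            by_contra hne
            exact H3 α β β δ α δ nav nbv nbv ndv nav ndv nab nbd nad
              (sym2_ne_fst nab nad) (sym2_ne_snd nab.symm nbd)
              (sym2_ne_fst nab.symm nbd) E1 E4 hne
          have Ebg : G.Adj β γ := by
            by_contra hne
            exact H3 α β β δ β γ nav nbv nbv ndv nbv ngv nab nbd nbg
              (sym2_ne_fst nab nad) (sym2_ne_fst nab nag)
              (sym2_ne_snd nbd.symm ngd.symm) E1 E4 hne
          exact spider_pairing hfree hx ndx.symm ngx.symm nab nag nav nbd.symm ngd.symm ndv nbv ngv
            hxa Ead hxb Ebg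
      · have Ead : G.Adj α δ := by
          by_contra hne
          exact H3 α β α γ α δ nav nbv nav ngv nav ndv nab nag nad
            (sym2_ne_snd nab.symm nbg) (sym2_ne_snd nab.symm nbd)
            (sym2_ne_snd nag.symm ngd) E1 E3 hne
        have Ebg : G.Adj β γ := by
          by_contra hne
          exact H3 α β α γ β γ nav nbv nav ngv nbv ngv nab nag nbg
            (sym2_ne_snd nab.symm nbg) (sym2_ne_fst nab nag)
            (sym2_ne_fst nab nag) E1 E3 hne
        exact spider_pairing hfree hx ndx.symm ngx.symm nab nag nav nbd.symm ngd.symm ndv nbv ngv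
          hxa Ead hxb Ebg
  have SL2 : ∀ α β γ δ : V, α ≠ β → α ≠ γ → α ≠ δ → β ≠ γ → β ≠ δ → γ ≠ δ →
      α ≠ x → β ≠ x → γ ≠ x → δ ≠ x → α ≠ v → β ≠ v → γ ≠ v → δ ≠ v →
      G.Adj x α → G.Adj x β → ¬ G.Adj x γ → ¬ G.Adj x δ → False := by
    intro α β γ δ nab nag nad nbg nbd ngd nax nbx ngx ndx nav nbv ngv ndv hxa hxb hnc hnd
    have Eag : G.Adj α γ := by
      by_contra hne
      exact H3 x γ x δ α γ hxv' ngv hxv' ndv nav ngv ngx.symm ndx.symm nag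
        (sym2_ne_snd ngx ngd) (sym2_ne_fst nax.symm ngx.symm)
        (sym2_ne_fst nax.symm ngx.symm) hnc hnd hne
    have Ebd : G.Adj β δ := by
      by_contra hne
      exact H3 x γ x δ β δ hxv' ngv hxv' ndv nbv ndv ngx.symm ndx.symm nbd
        (sym2_ne_snd ngx ngd) (sym2_ne_fst nbx.symm ndx.symm)
        (sym2_ne_fst nbx.symm ndx.symm) hnc hnd hne
    exact spider_pairing hfree hx ngx.symm ndx.symm nab nad nav nbg.symm ngd ngv nbv ndv
      hxa Eag hxb Ebd
  have SL0 : ∀ γ δ ε : V, γ ≠ δ → γ ≠ ε → δ ≠ ε → γ ≠ x → δ ≠ x → ε ≠ x →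
      γ ≠ v → δ ≠ v → ε ≠ v →
      ¬ G.Adj x γ → ¬ G.Adj x δ → ¬ G.Adj x ε → False := by
    intro γ δ ε gd ge de gx dx ex gv dv ev h1 h2 h3
    exact H3 x γ x δ x ε hxv' gv hxv' dv hxv' ev gx.symm dx.symm ex.symm
      (sym2_ne_snd gx gd) (sym2_ne_snd gx ge) (sym2_ne_snd dx de) h1 h2 h3
  have pq : p ≠ q := hqp.symm
  have pr : p ≠ r := hrp.symm
  have ps : p ≠ s := hsp.symm
  by_cases Xp : G.Adj x p <;> by_cases Xq : G.Adj x q <;>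
    by_cases Xr : G.Adj x r <;> by_cases Xs : G.Adj x s
  · exact SL1 p q r s pq pr ps hqr hqs hrs hpx hqx hrx hsx hpv hqv hrv hsv Xp Xq Xr
  · exact SL1 p q r s pq pr ps hqr hqs hrs hpx hqx hrx hsx hpv hqv hrv hsv Xp Xq Xr
  · exact SL1 p q s r pq ps pr hqs hqr hrs.symm hpx hqx hsx hrx hpv hqv hsv hrv Xp Xq Xs
  · exact SL2 p q r s pq pr ps hqr hqs hrs hpx hqx hrx hsx hpv hqv hrv hsv Xp Xq Xr Xs
  · exact SL1 p r s q pr ps pq hrs hqr.symm hqs.symm hpx hrx hsx hqx hpv hrv hsv hqv Xp Xr Xs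
  · exact SL2 p r q s pr pq ps hqr.symm hrs hqs hpx hrx hqx hsx hpv hrv hqv hsv Xp Xr Xq Xs
  · exact SL2 p s q r ps pq pr hqs.symm hrs.symm hqr hpx hsx hqx hrx hpv hsv hqv hrv Xp Xs Xq Xr
  · exact SL0 q r s hqr hqs hrs hqx hrx hsx hqv hrv hsv Xq Xr Xs
  · exact SL1 q r s p hqr hqs pq.symm hrs pr.symm ps.symm hqx hrx hsx hpx hqv hrv hsv hpv Xq Xr Xs
  · exact SL2 q r p s hqr pq.symm hqs pr.symm hrs ps hqx hrx hpx hsx hqv hrv hpv hsv Xq Xr Xp Xs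
  · exact SL2 q s p r hqs pq.symm hqr ps.symm hrs.symm pr hqx hsx hpx hrx hqv hsv hpv hrv Xq Xs Xp Xr
  · exact SL0 p r s pr ps hrs hpx hrx hsx hpv hrv hsv Xp Xr Xs
  · exact SL2 r s p q hrs pr.symm hqr.symm ps.symm hqs.symm pq hrx hsx hpx hqx hrv hsv hpv hqv Xr Xs Xp Xq
  · exact SL0 p q s pq ps hqs hpx hqx hsx hpv hqv hsv Xp Xq Xs
  · exact SL0 p q r pq pr hqr hpx hqx hrx hpv hqv hrv Xp Xq Xr
  · exact SL0 p q r pq pr hqr hpx hqx hrx hpv hqv hrv Xp Xq Xr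

end MinDeg

section Decomp
variable {V : Type*} [Fintype V] [DecidableEq V] {G : SimpleGraph V} [DecidableRel G.Adj]

lemma conn_del_of_deg_le_one (hconn : G.Connected) (hcard : 2 ≤ Fintype.card V) {v : V}
    (hdeg : G.degree v ≤ 1) : (G.induce ({v}ᶜ : Set V)).Connected := by
  have hnt : Nontrivial V := Fintype.one_lt_card_iff_nontrivial.1 hcard
  obtain ⟨a, hav⟩ := exists_ne v
  obtain ⟨w0⟩ := hconn.preconnected a v
  obtain ⟨u0, hu0, w0', hw0'⟩ := walk_to_nbr w0 hav
  apply conn_induce_of_walks _ u0 (Set.mem_compl_singleton_iff.2 hu0.ne')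
  intro x hxs
  have hxv : x ≠ v := Set.mem_compl_singleton_iff.1 hxs
  obtain ⟨wx⟩ := hconn.preconnected x v
  obtain ⟨u1, hu1, w1, hw1⟩ := walk_to_nbr wx hxv
  have hcard1 : (G.neighborFinset v).card ≤ 1 := by
    rw [card_neighborFinset_eq_degree]; exact hdeg
  have hu10 : u1 = u0 := by
    apply Finset.card_le_one.1 hcard1 <;> rwa [mem_neighborFinset]
  subst hu10
  exact ⟨w1, fun z hz => Set.mem_compl_singleton_iff.2 (hw1 z hz)⟩

lemma decomp {v a b : V} (hconn : G.Connected)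
    (hdisc : ¬ (G.induce ({v}ᶜ : Set V)).Connected)
    (hnbr : G.neighborFinset v = {a, b}) (hab : a ≠ b) :
    ∃ sA sB : Set V,
      sA ∪ sB = Set.univ ∧ sA ∩ sB = {v} ∧
      (∀ x ∈ sA, ∀ y ∈ sB, x ≠ v → y ≠ v → ¬ G.Adj x y) ∧
      a ∈ sA ∧ b ∈ sB ∧
      (G.induce sA).Connected ∧ (G.induce sB).Connected ∧
      (∀ z ∈ sA, G.Adj v z → z = a) ∧ (∀ z ∈ sB, G.Adj v z → z = b) := by
  classical
  have hva : G.Adj v a := by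
    rw [← mem_neighborFinset, hnbr]; simp
  have hvb : G.Adj v b := by
    rw [← mem_neighborFinset, hnbr]; simp
  have hmem_ab : ∀ z, G.Adj v z → z = a ∨ z = b := by
    intro z hz
    have : z ∈ G.neighborFinset v := by rwa [mem_neighborFinset]
    rw [hnbr] at this
    simpa using this
  set Rav : V → Prop := fun x => x ≠ v ∧ ∃ w : G.Walk x a, ∀ z ∈ w.support, z ≠ v with hRav
  have hnRb : ¬ Rav b := by
    intro hr
    apply hdisc
    obtain ⟨-, wba, hwba⟩ := hr
    apply conn_induce_of_walks _ a (Set.mem_compl_singleton_iff.2 hva.ne')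
    intro x hxs
    have hxv : x ≠ v := Set.mem_compl_singleton_iff.1 hxs
    obtain ⟨wx⟩ := hconn.preconnected x v
    obtain ⟨u, hu, w', hw'⟩ := walk_to_nbr wx hxv
    rcases hmem_ab u hu with rfl | rfl
    · exact ⟨w', fun z hz => Set.mem_compl_singleton_iff.2 (hw' z hz)⟩
    · refine ⟨w'.append wba, fun z hz => Set.mem_compl_singleton_iff.2 ?_⟩
      rw [SimpleGraph.Walk.support_append, List.mem_append] at hz
      rcases hz with hz | hz
      · exact hw' z hz
      · exact hwba z (List.mem_of_mem_tail hz)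
  refine ⟨{x | x = v ∨ Rav x}, {x | x = v ∨ (x ≠ v ∧ ¬ Rav x)}, ?_, ?_, ?_, ?_, ?_, ?_, ?_, ?_, ?_⟩
  case refine_1 =>
    ext z
    simp only [Set.mem_union, Set.mem_setOf_eq, Set.mem_univ, iff_true]
    by_cases hz : z = v
    · left; left; exact hz
    · by_cases hr : Rav z
      · left; right; exact hr
      · right; right; exact ⟨hz, hr⟩
  case refine_2 =>
    ext z
    simp only [Set.mem_inter_iff, Set.mem_setOf_eq, Set.mem_singleton_iff]
    constructor
    · rintro ⟨h1 | h1, h2 | h2⟩ <;> first | assumption | (exfalso; tauto)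
    · rintro rfl; exact ⟨Or.inl rfl, Or.inl rfl⟩
  case refine_3 =>
    rintro x (rfl | hx) y (rfl | hy) hxv hyv hadj
    · exact hxv rfl
    · exact hxv rfl
    · exact hyv rfl
    · obtain ⟨-, wxa, hwxa⟩ := hx
      obtain ⟨-, hyr⟩ := hy
      apply hyr
      refine ⟨hyv, SimpleGraph.Walk.cons hadj.symm wxa, ?_⟩
      intro z hz
      rw [SimpleGraph.Walk.support_cons, List.mem_cons] at hz
      rcases hz with rfl | hz
      · exact hyv
      · exact hwxa z hz
  case refine_4 =>
    exact Or.inr ⟨hva.ne', SimpleGraph.Walk.nil, by simpa using hva.ne'⟩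
  case refine_5 =>
    exact Or.inr ⟨hvb.ne', hnRb⟩
  case refine_6 =>
    apply conn_induce_of_walks _ a
      (Or.inr ⟨hva.ne', SimpleGraph.Walk.nil, by simpa using hva.ne'⟩)
    rintro x (rfl | hx)
    · refine ⟨SimpleGraph.Walk.cons hva SimpleGraph.Walk.nil, ?_⟩
      intro z hz
      simp only [SimpleGraph.Walk.support_cons, SimpleGraph.Walk.support_nil,
        List.mem_cons, List.mem_singleton, List.not_mem_nil] at hz
      rcases hz with rfl | rfl | h
      · exact Or.inl rfl
      · exact Or.inr ⟨hva.ne', SimpleGraph.Walk.nil, by simpa using hva.ne'⟩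
      · exact absurd h (by simp)
    · obtain ⟨hxv, wxa, hwxa⟩ := hx
      refine ⟨wxa, fun z hz => ?_⟩
      refine Or.inr ⟨hwxa z hz, wxa.dropUntil z hz, fun t ht => ?_⟩
      exact hwxa t (SimpleGraph.Walk.support_dropUntil_subset wxa hz ht)
  case refine_7 =>
    apply conn_induce_of_walks _ b (Or.inr ⟨hvb.ne', hnRb⟩)
    rintro x (rfl | ⟨hxv, hxr⟩)
    · refine ⟨SimpleGraph.Walk.cons hvb SimpleGraph.Walk.nil, ?_⟩
      intro z hz
      simp only [SimpleGraph.Walk.support_cons, SimpleGraph.Walk.support_nil,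
        List.mem_cons, List.mem_singleton, List.not_mem_nil] at hz
      rcases hz with rfl | rfl | h
      · exact Or.inl rfl
      · exact Or.inr ⟨hvb.ne', hnRb⟩
      · exact absurd h (by simp)
    · obtain ⟨wx⟩ := hconn.preconnected x v
      obtain ⟨u, hu, w', hw'⟩ := walk_to_nbr wx hxv
      rcases hmem_ab u hu with rfl | rfl
      · exact absurd ⟨hxv, w', hw'⟩ hxr
      · refine ⟨w', fun z hz => Or.inr ⟨hw' z hz, fun hRz => hxr ?_⟩⟩
        obtain ⟨hzv, wza, hwza⟩ := hRz
        refine ⟨hxv, (w'.takeUntil z hz).append wza, ?_⟩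
        intro t ht
        rw [SimpleGraph.Walk.support_append, List.mem_append] at ht
        rcases ht with ht | ht
        · exact hw' t (SimpleGraph.Walk.support_takeUntil_subset w' hz ht)
        · exact hwza t (List.mem_of_mem_tail ht)
  case refine_8 =>
    rintro z (rfl | ⟨hzv, hzr⟩) hz
    · exact absurd rfl hz.ne
    · rcases hmem_ab z hz with rfl | rfl
      · rfl
      · exact absurd ⟨hzv, hzr⟩ hnRb
  case refine_9 =>
    rintro z (rfl | ⟨hzv, hzr⟩) hz
    · exact absurd rfl hz.ne
    · rcases hmem_ab z hz with rfl | rfl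
      · exact absurd ⟨hzv, SimpleGraph.Walk.nil, by simpa using hzv⟩ hzr
      · rfl

end Decomp

lemma small_bound {W : Type*} [Fintype W] [DecidableEq W] (H : SimpleGraph W)
    [DecidableRel H.Adj] {u : W} (hdeg : H.degree u = 1) (hc : Fintype.card W ≤ 5) :
    H.edgeFinset.card ≤ 2 * Fintype.card W - 3 := by
  classical
  have hdel := edge_delete H u
  have hle := (H.induce ({u}ᶜ : Set W)).card_edgeFinset_le_card_choose_two
  have hcompl : Fintype.card ↥({u}ᶜ : Set W) = Fintype.card W - 1 := by
    rw [Fintype.card_compl_set]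
    simp
  rw [hcompl] at hle
  have hcard2 : 2 ≤ Fintype.card W := by
    have : 0 < H.degree u := by omega
    rw [← card_neighborFinset_eq_degree] at this
    obtain ⟨z, hz⟩ := Finset.card_pos.1 this
    rw [mem_neighborFinset] at hz
    have : ({u, z} : Finset W).card = 2 := by
      rw [Finset.card_insert_of_notMem (by simpa using hz.ne), Finset.card_singleton]
    calc 2 = ({u, z} : Finset W).card := this.symm
    _ ≤ (Finset.univ : Finset W).card := Finset.card_le_card (by simp)
    _ = Fintype.card W := Finset.card_univ
  have hkey : (Fintype.card W - 1).choose 2 + 1 ≤ 2 * Fintype.card W - 3 := by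
    interval_cases h : Fintype.card W <;> decide
  omega

universe u in
theorem upper_main (N : ℕ) : ∀ {V : Type u} [Fintype V] [DecidableEq V]
    (G : SimpleGraph V) [DecidableRel G.Adj], Fintype.card V = N → 6 ≤ N →
    G.Connected → ¬ HasS G → G.edgeFinset.card ≤ 2 * N - 3 := by
  induction N using Nat.strong_induction_on with
  | _ N IH =>
    intro V _ _ G _ hcard hN hconn hfree
    by_cases hmin : ∀ v, 3 ≤ G.degree v
    · exact absurd (hasS_of_minDeg hconn (by omega) hmin) hfree
    push_neg at hmin
    obtain ⟨v, hv3⟩ := hmin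
    have hv : G.degree v ≤ 2 := by omega
    by_cases hconn' : (G.induce ({v}ᶜ : Set V)).Connected
    · rcases Nat.eq_or_lt_of_le hN with h6 | h7
      · have := base6 (by omega) hconn hfree hv
        omega
      · have hcompl : Fintype.card ↥({v}ᶜ : Set V) = N - 1 := by
          rw [Fintype.card_compl_set]
          simp [hcard]
        have hfree' : ¬ HasS (G.induce ({v}ᶜ : Set V)) := fun h => hfree (hasS_induce h)
        have hIH := IH (N-1) (by omega) (G.induce ({v}ᶜ : Set V)) hcompl (by omega) hconn' hfree'
        have hdel := edge_delete G v
        omega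
    · have hdeg2 : G.degree v = 2 := by
        rcases Nat.lt_or_ge (G.degree v) 2 with h | h
        · exact absurd (conn_del_of_deg_le_one hconn (by omega) (by omega)) hconn'
        · omega
      have h2 : (G.neighborFinset v).card = 2 := by
        rw [card_neighborFinset_eq_degree]; exact hdeg2
      rw [Finset.card_eq_two] at h2
      obtain ⟨a, b, hab, hnbr⟩ := h2
      obtain ⟨sA, sB, hunion, hinter, hcross, haA, hbB, hconnA, hconnB, hnA, hnB⟩ :=
        decomp hconn hconn' hnbr hab
      haveI : DecidablePred (· ∈ sA) := Classical.decPred _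
      haveI : DecidablePred (· ∈ sB) := Classical.decPred _
      have hsplit := edge_split G sA sB v hunion hinter hcross
      have hva : G.Adj v a := by rw [← mem_neighborFinset, hnbr]; simp
      have hvb : G.Adj v b := by rw [← mem_neighborFinset, hnbr]; simp
      have hvA : v ∈ sA := by
        have : v ∈ sA ∩ sB := hinter.symm ▸ Set.mem_singleton v
        exact this.1
      have hvB : v ∈ sB := by
        have : v ∈ sA ∩ sB := hinter.symm ▸ Set.mem_singleton v
        exact this.2
      have hbA : b ∉ sA := by
        intro h
        have : b ∈ sA ∩ sB := ⟨h, hbB⟩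
        rw [hinter] at this
        exact hvb.ne' this
      have haB : a ∉ sB := by
        intro h
        have : a ∈ sA ∩ sB := ⟨haA, h⟩
        rw [hinter] at this
        exact hva.ne' this
      -- cardinalities
      have hcardsum : Fintype.card ↥sA + Fintype.card ↥sB = N + 1 := by
        rw [← Set.toFinset_card, ← Set.toFinset_card]
        have hu : sA.toFinset ∪ sB.toFinset = Finset.univ := by
          ext z
          simp only [Finset.mem_union, Set.mem_toFinset, Finset.mem_univ, iff_true]
          have : z ∈ sA ∪ sB := hunion.symm ▸ Set.mem_univ z
          rwa [Set.mem_union] at this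
        have hi : sA.toFinset ∩ sB.toFinset = {v} := by
          ext z
          simp only [Finset.mem_inter, Set.mem_toFinset, Finset.mem_singleton]
          constructor
          · intro hz
            have : z ∈ sA ∩ sB := hz
            rw [hinter] at this
            exact this
          · rintro rfl
            exact ⟨hvA, hvB⟩
        have := Finset.card_union_add_card_inter sA.toFinset sB.toFinset
        rw [hu, hi, Finset.card_univ, hcard, Finset.card_singleton] at this
        omega
      have hcardA2 : 2 ≤ Fintype.card ↥sA := by
        rw [← Set.toFinset_card]
        have hsub : ({v, a} : Finset V) ⊆ sA.toFinset := by
          intro z hz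
          simp only [Finset.mem_insert, Finset.mem_singleton] at hz
          rcases hz with rfl | rfl <;> rw [Set.mem_toFinset] <;> assumption
        have : ({v, a} : Finset V).card = 2 := by
          rw [Finset.card_insert_of_notMem (by simpa using hva.ne), Finset.card_singleton]
        calc 2 = ({v, a} : Finset V).card := this.symm
        _ ≤ sA.toFinset.card := Finset.card_le_card hsub
      have hcardB2 : 2 ≤ Fintype.card ↥sB := by
        rw [← Set.toFinset_card]
        have hsub : ({v, b} : Finset V) ⊆ sB.toFinset := by
          intro z hz
          simp only [Finset.mem_insert, Finset.mem_singleton] at hz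
          rcases hz with rfl | rfl <;> rw [Set.mem_toFinset] <;> assumption
        have : ({v, b} : Finset V).card = 2 := by
          rw [Finset.card_insert_of_notMem (by simpa using hvb.ne), Finset.card_singleton]
        calc 2 = ({v, b} : Finset V).card := this.symm
        _ ≤ sB.toFinset.card := Finset.card_le_card hsub
      -- degree of v inside each part is 1
      have hdegA : (G.induce sA).degree ⟨v, hvA⟩ = 1 := by
        rw [deg_induce]
        have : (G.neighborFinset v).filter (· ∈ sA) = {a} := by
          ext z
          simp only [Finset.mem_filter, mem_neighborFinset, Finset.mem_singleton]
          constructor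
          · rintro ⟨h1, h2⟩; exact hnA z h2 h1
          · rintro rfl; exact ⟨hva, haA⟩
        rw [this, Finset.card_singleton]
      have hdegB : (G.induce sB).degree ⟨v, hvB⟩ = 1 := by
        rw [deg_induce]
        have : (G.neighborFinset v).filter (· ∈ sB) = {b} := by
          ext z
          simp only [Finset.mem_filter, mem_neighborFinset, Finset.mem_singleton]
          constructor
          · rintro ⟨h1, h2⟩; exact hnB z h2 h1
          · rintro rfl; exact ⟨hvb, hbB⟩
        rw [this, Finset.card_singleton]
      have hfreeA : ¬ HasS (G.induce sA) := fun h => hfree (hasS_induce h)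
      have hfreeB : ¬ HasS (G.induce sB) := fun h => hfree (hasS_induce h)
      -- bound each part
      have hboundA : (G.induce sA).edgeFinset.card ≤ 2 * Fintype.card ↥sA - 3 := by
        rcases Nat.lt_or_ge (Fintype.card ↥sA) 6 with hsmall | hbig
        · exact small_bound _ hdegA (by omega)
        · exact IH (Fintype.card ↥sA) (by omega) (G.induce sA) rfl hbig hconnA hfreeA
      have hboundB : (G.induce sB).edgeFinset.card ≤ 2 * Fintype.card ↥sB - 3 := by
        rcases Nat.lt_or_ge (Fintype.card ↥sB) 6 with hsmall | hbig
        · exact small_bound _ hdegB (by omega)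
        · exact IH (Fintype.card ↥sB) (by omega) (G.induce sB) rfl hbig hconnB hfreeB
      omega

lemma lower_bound (n : ℕ) (hn : 6 ≤ n) :
    ∃ G : SimpleGraph (Fin n), G.Connected ∧ ¬ ContainsCopy spider221 G ∧
      G.edgeSet.ncard = 2 * n - 3 := by
  classical
  set z : Fin n := ⟨0, by omega⟩ with hz
  set o : Fin n := ⟨1, by omega⟩ with ho
  have hzo : z ≠ o := by
    simp [hz, ho, Fin.ext_iff]
  set G : SimpleGraph (Fin n) := SimpleGraph.fromRel (fun x y => x = z ∨ x = o) with hG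
  have hadj : ∀ x y : Fin n, G.Adj x y ↔ x ≠ y ∧ (x = z ∨ x = o ∨ y = z ∨ y = o) := by
    intro x y
    rw [hG, fromRel_adj]
    tauto
  have hadjz : ∀ x : Fin n, x ≠ z → G.Adj x z := by
    intro x hx
    rw [hadj]
    tauto
  refine ⟨G, ?_, ?_, ?_⟩
  · rw [connected_iff]
    refine ⟨fun x y => ?_, ⟨z⟩⟩
    by_cases hx : x = z <;> by_cases hy : y = z
    · subst hx; subst hy; exact Reachable.refl _
    · subst hx; exact ((hadjz y hy).reachable).symm
    · subst hy; exact (hadjz x hx).reachable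
    · exact ((hadjz x hx).reachable).trans ((hadjz y hy).reachable).symm
  · rw [containsCopy_iff_hasS]
    rintro ⟨v, x1, x2, x3, x4, x5, hnd, h1, h2, h3, h4, h5⟩
    simp only [List.nodup_cons, List.mem_cons, List.mem_singleton, List.not_mem_nil,
      List.nodup_nil, or_false, not_or, and_true] at hnd
    obtain ⟨⟨e1,e2,e3,e4,e5⟩,⟨e6,e7,e8,e9⟩,⟨e10,e11,e12⟩,⟨e13,e14⟩,e15,-⟩ := hnd
    rw [hadj] at h1 h2 h3 h4 h5
    -- the hub case analysis
    have key : ∀ h' : Fin n, v ≠ h' →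
        (∀ a b : Fin n, G.Adj a b → a = v ∨ a = h' ∨ b = v ∨ b = h') → False := by
      intro h' hne hhub
      have hx1 : x1 = h' ∨ x2 = h' := by
        rw [← hadj] at h2
        rcases hhub x1 x2 h2 with h | h | h | h
        · exact absurd h.symm e1
        · exact Or.inl h
        · exact absurd h.symm e2
        · exact Or.inr h
      have hx3 : x3 = h' ∨ x4 = h' := by
        rw [← hadj] at h4
        rcases hhub x3 x4 h4 with h | h | h | h
        · exact absurd h.symm e3
        · exact Or.inl h
        · exact absurd h.symm e4
        · exact Or.inr h
      rcases hx1 with hh | hh <;> rcases hx3 with hh' | hh'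
      · exact e7 (hh.trans hh'.symm)
      · exact e8 (hh.trans hh'.symm)
      · exact e10 (hh.trans hh'.symm)
      · exact e11 (hh.trans hh'.symm)
    by_cases hvz : v = z
    · refine key o (by rw [hvz]; exact hzo) ?_
      intro a b hab
      rw [hadj] at hab
      rcases hab.2 with h | h | h | h
      · exact Or.inl (h.trans hvz.symm)
      · exact Or.inr (Or.inl h)
      · exact Or.inr (Or.inr (Or.inl (h.trans hvz.symm)))
      · exact Or.inr (Or.inr (Or.inr h))
    by_cases hvo : v = o
    · refine key z (by rw [hvo]; exact hzo.symm) ?_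
      intro a b hab
      rw [hadj] at hab
      rcases hab.2 with h | h | h | h
      · exact Or.inr (Or.inl h)
      · exact Or.inl (h.trans hvo.symm)
      · exact Or.inr (Or.inr (Or.inr h))
      · exact Or.inr (Or.inr (Or.inl (h.trans hvo.symm)))
    -- v is not a hub: x1, x3, x5 must all be hubs
    have hx1 : x1 = z ∨ x1 = o := by
      rcases h1.2 with h | h | h | h
      · exact absurd h hvz
      · exact absurd h hvo
      · exact Or.inl h
      · exact Or.inr h
    have hx3 : x3 = z ∨ x3 = o := by
      rcases h3.2 with h | h | h | h
      · exact absurd h hvz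
      · exact absurd h hvo
      · exact Or.inl h
      · exact Or.inr h
    have hx5 : x5 = z ∨ x5 = o := by
      rcases h5.2 with h | h | h | h
      · exact absurd h hvz
      · exact absurd h hvo
      · exact Or.inl h
      · exact Or.inr h
    rcases hx1 with h1' | h1' <;> rcases hx3 with h3' | h3' <;> rcases hx5 with h5' | h5' <;>
      first
        | exact e7 (h1'.trans h3'.symm)
        | exact e9 (h1'.trans h5'.symm)
        | exact e14 (h3'.trans h5'.symm)
  · -- edge count
    have hedge : G.edgeSet.ncard = G.edgeFinset.card := by
      rw [Set.ncard_eq_toFinset_card' G.edgeSet]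
      exact congrArg Finset.card (by ext e; simp)
    rw [hedge]
    have hsum := G.sum_degrees_eq_twice_card_edges
    have hdz : G.degree z = n - 1 := by
      rw [← card_neighborFinset_eq_degree]
      have : G.neighborFinset z = Finset.univ.erase z := by
        ext t
        simp only [mem_neighborFinset, Finset.mem_erase, Finset.mem_univ, and_true]
        rw [hadj]
        constructor
        · rintro ⟨hne, -⟩; exact hne.symm
        · intro hne; exact ⟨hne.symm, by tauto⟩
      rw [this, Finset.card_erase_of_mem (Finset.mem_univ z), Finset.card_univ, Fintype.card_fin]
    have hdo : G.degree o = n - 1 := by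
      rw [← card_neighborFinset_eq_degree]
      have : G.neighborFinset o = Finset.univ.erase o := by
        ext t
        simp only [mem_neighborFinset, Finset.mem_erase, Finset.mem_univ, and_true]
        rw [hadj]
        constructor
        · rintro ⟨hne, -⟩; exact hne.symm
        · intro hne; exact ⟨hne.symm, by tauto⟩
      rw [this, Finset.card_erase_of_mem (Finset.mem_univ o), Finset.card_univ, Fintype.card_fin]
    have hdother : ∀ x : Fin n, x ≠ z → x ≠ o → G.degree x = 2 := by
      intro x hxz hxo
      rw [← card_neighborFinset_eq_degree]
      have : G.neighborFinset x = {z, o} := by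
        ext t
        simp only [mem_neighborFinset, Finset.mem_insert, Finset.mem_singleton]
        rw [hadj]
        constructor
        · rintro ⟨hne, hh⟩; tauto
        · rintro (rfl | rfl)
          · exact ⟨hxz, by tauto⟩
          · exact ⟨hxo, by tauto⟩
      rw [this, Finset.card_insert_of_notMem (by simpa using hzo), Finset.card_singleton]
    have hsplit : ∑ w : Fin n, G.degree w
        = G.degree z + (G.degree o + ∑ w ∈ (Finset.univ.erase z).erase o, G.degree w) := by
      rw [← Finset.add_sum_erase _ _ (Finset.mem_univ z),
        ← Finset.add_sum_erase _ _ (Finset.mem_erase.2 ⟨hzo.symm, Finset.mem_univ o⟩)]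
    have hrest : ∑ w ∈ (Finset.univ.erase z).erase o, G.degree w
        = 2 * (n - 2) := by
      have hcongr : ∑ w ∈ (Finset.univ.erase z).erase o, G.degree w
          = ∑ _w ∈ (Finset.univ.erase z).erase o, 2 := by
        apply Finset.sum_congr rfl
        intro w hw
        rw [Finset.mem_erase, Finset.mem_erase] at hw
        exact hdother w hw.2.1 hw.1
      rw [hcongr, Finset.sum_const, smul_eq_mul]
      have hcc : ((Finset.univ.erase z).erase o).card = n - 2 := by
        rw [Finset.card_erase_of_mem (Finset.mem_erase.2 ⟨hzo.symm, Finset.mem_univ o⟩),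
          Finset.card_erase_of_mem (Finset.mem_univ z), Finset.card_univ, Fintype.card_fin]
        omega
      rw [hcc]
      ring
    omega

/-- Theorem: `ex_c(n, S_{2,2,1}) = 2n - 3` for every `n ≥ 6`. -/
theorem exConn_spider221 (n : ℕ) (hn : 6 ≤ n) :
    exConn n spider221 = 2 * n - 3 := by
  classical
  obtain ⟨G₀, hc0, hf0, he0⟩ := lower_bound n hn
  have hub : ∀ m ∈ {m | ∃ G : SimpleGraph (Fin n), G.Connected ∧ ¬ ContainsCopy spider221 G ∧
      m = G.edgeSet.ncard}, m ≤ 2 * n - 3 := by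
    rintro m ⟨G, hc, hf, rfl⟩
    haveI : DecidableRel G.Adj := Classical.decRel _
    have hfree : ¬ HasS G := fun h => hf ((containsCopy_iff_hasS G).2 h)
    have hupper := upper_main n G (by simp) hn hc hfree
    have hedge : G.edgeSet.ncard = G.edgeFinset.card := by
      rw [Set.ncard_eq_toFinset_card' G.edgeSet]
      exact congrArg Finset.card (by ext e; simp)
    rw [hedge]
    exact hupper
  rw [exConn]
  apply le_antisymm
  · exact csSup_le ⟨_, ⟨G₀, hc0, hf0, rfl⟩⟩ hub
  · exact le_csSup ⟨2 * n - 3, hub⟩ ⟨G₀, hc0, hf0, he0.symm⟩
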